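/- Let F be a finite field of characteristic p with q elements, and for n ∈ ℕ₀ let f_n : F → F, f_n(x) = x^n. Then fdeg(f_n) ≤ s_p(n), where s_p(n) is the digit sum of n in base p; and if n < q, then fdeg(f_n) = s_p(n). -/

import Mathlib

open scoped BigOperators

/-- Action of the integral group ring `ℤ[A]` on functions `A → B`:
`(τ_a * f)(x) = f(x + a)`, extended linearly. -/
noncomputable def groupRingAct {A B : Type*} [AddCommGroup A] [AddCommGroup B]
    (r : AddMonoidAlgebra ℤ A) (f : A → B) : A → B :=
  fun x => r.coeff.sum fun a z => z • f (x + a)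

/-- The augmentation ideal of the group ring `R[A]`. -/
noncomputable def augIdealR (R : Type*) (A : Type*) [CommRing R] [AddCommGroup A] :
    Ideal (AddMonoidAlgebra R A) :=
  Ideal.span {r : AddMonoidAlgebra R A | ∃ a : A, r = AddMonoidAlgebra.single a 1 - 1}

/-- The augmentation ideal of `ℤ[A]`. -/
noncomputable def augIdeal (A : Type*) [AddCommGroup A] : Ideal (AddMonoidAlgebra ℤ A) :=
  augIdealR ℤ A

/-- The functional degree of `f : A → B`: the least `n` with `I^(n+1) * f = 0`,
where `I` is the augmentation ideal of `ℤ[A]`; `⊤` if there is no such `n`. -/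
noncomputable def fdeg {A B : Type*} [AddCommGroup A] [AddCommGroup B] (f : A → B) : ℕ∞ :=
  sInf {N : ℕ∞ | ∃ n : ℕ, N = (n : ℕ∞) ∧
    ∀ r ∈ augIdeal A ^ (n + 1), groupRingAct r f = 0}

namespace FdegAux

/-! ### Basic lemmas about `groupRingAct` -/

section act
variable {A B : Type*} [AddCommGroup A] [AddCommGroup B]

theorem act_zero (f : A → B) : groupRingAct 0 f = 0 := by
  funext x; simp [groupRingAct]

theorem act_fun_zero (r : AddMonoidAlgebra ℤ A) : groupRingAct r (0 : A → B) = 0 := by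
  funext x; simp [groupRingAct]

theorem act_add (r s : AddMonoidAlgebra ℤ A) (f : A → B) :
    groupRingAct (r + s) f = groupRingAct r f + groupRingAct s f := by
  funext x
  simp only [groupRingAct, Pi.add_apply, AddMonoidAlgebra.coeff_add]
  classical
  rw [Finsupp.sum_add_index]
  · intro a _; simp
  · intro a _ z w; simp [add_smul]

theorem act_fun_add (r : AddMonoidAlgebra ℤ A) (f g : A → B) :
    groupRingAct r (f + g) = groupRingAct r f + groupRingAct r g := by
  funext x
  simp only [groupRingAct, Pi.add_apply, smul_add]
  rw [Finsupp.sum_add]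

theorem act_single (a : A) (z : ℤ) (f : A → B) :
    groupRingAct (AddMonoidAlgebra.single a z) f = fun x => z • f (x + a) := by
  funext x
  simp only [groupRingAct, AddMonoidAlgebra.coeff_single]
  rw [Finsupp.sum_single_index]
  simp

theorem act_one (f : A → B) : groupRingAct 1 f = f := by
  have : (1 : AddMonoidAlgebra ℤ A) = AddMonoidAlgebra.single 0 1 := rfl
  rw [this, act_single]; funext x; simp

theorem act_neg (r : AddMonoidAlgebra ℤ A) (f : A → B) :
    groupRingAct (-r) f = -groupRingAct r f := by
  have := act_add r (-r) f
  rw [add_neg_cancel, act_zero] at this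
  linear_combination (norm := abel) -this

theorem act_sub (r s : AddMonoidAlgebra ℤ A) (f : A → B) :
    groupRingAct (r - s) f = groupRingAct r f - groupRingAct s f := by
  rw [sub_eq_add_neg, act_add, act_neg, sub_eq_add_neg]

theorem act_mul (r s : AddMonoidAlgebra ℤ A) (f : A → B) :
    groupRingAct (r * s) f = groupRingAct r (groupRingAct s f) := by
  induction r using AddMonoidAlgebra.induction with
  | zero => simp [act_zero]
  | single_add a z r _ _ ih =>
      rw [add_mul, act_add, act_add, ih]
      congr 1
      clear ih
      induction s using AddMonoidAlgebra.induction with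
      | zero => simp [act_zero, act_fun_zero]
      | single_add b w s _ _ ih2 =>
          rw [mul_add, act_add, act_add, act_fun_add, ih2]
          congr 1
          rw [AddMonoidAlgebra.single_mul_single, act_single, act_single, act_single]
          funext x
          simp [mul_smul, add_assoc]

/-- discrete difference operator -/
def dOp (a : A) (f : A → B) : A → B := fun x => f (x + a) - f x

noncomputable def genG (a : A) : AddMonoidAlgebra ℤ A := AddMonoidAlgebra.single a 1 - 1

theorem act_genG (a : A) (f : A → B) : groupRingAct (genG a) f = dOp a f := by
  rw [genG, act_sub, act_single, act_one]
  funext x; simp [dOp]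

noncomputable def prodG : List A → AddMonoidAlgebra ℤ A
  | [] => 1
  | a :: t => prodG t * genG a

theorem genG_mem (a : A) : genG a ∈ augIdeal A :=
  Ideal.subset_span ⟨a, rfl⟩

theorem prodG_mem (l : List A) : prodG l ∈ augIdeal A ^ l.length := by
  induction l with
  | nil => simpa [prodG] using Submodule.mem_top
  | cons a t ih =>
      rw [List.length_cons, pow_succ, prodG]
      exact Ideal.mul_mem_mul ih (genG_mem a)

theorem act_prodG_cons (a : A) (t : List A) (f : A → B) :
    groupRingAct (prodG (a :: t)) f = groupRingAct (prodG t) (dOp a f) := by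
  rw [prodG, act_mul, act_genG]

theorem act_pow_eq_zero (m : ℕ) (f : A → B)
    (h : ∀ l : List A, l.length = m → groupRingAct (prodG l) f = 0) :
    ∀ r ∈ augIdeal A ^ m, groupRingAct r f = 0 := by
  induction m generalizing f with
  | zero =>
      intro r _
      have hf : f = 0 := by simpa [prodG, act_one] using h [] rfl
      rw [hf, act_fun_zero]
  | succ m ih =>
      intro r hr
      rw [pow_succ] at hr
      let T : Ideal (AddMonoidAlgebra ℤ A) :=
        { carrier := {g | ∀ r' ∈ augIdeal A ^ m, groupRingAct (r' * g) f = 0}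
          add_mem' := by
            intro x y hx hy r' hr'
            rw [mul_add, act_add, hx r' hr', hy r' hr', add_zero]
          zero_mem' := by intro r' _; simp [act_zero]
          smul_mem' := by
            intro c x hx r' hr'
            have : r' * (c • x) = (r' * c) * x := by
              simp [smul_eq_mul]; ring
            rw [this]
            exact hx _ (Ideal.mul_mem_right c _ hr') }
      have hIT : augIdeal A ≤ T := by
        rw [augIdeal, augIdealR, Ideal.span_le]
        rintro _ ⟨a, rfl⟩
        intro r' hr'
        rw [show AddMonoidAlgebra.single a 1 - 1 = genG a from rfl, act_mul, act_genG]
        refine ih (dOp a f) ?_ r' hr'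
        intro l hl
        have := h (a :: l) (by simp [hl])
        rwa [act_prodG_cons] at this
      refine Submodule.mul_induction_on hr ?_ ?_
      · intro r' hr' g hg
        exact hIT hg r' hr'
      · intro x y hx hy
        rw [act_add, hx, hy, add_zero]

theorem fdeg_le_of (f : A → B) (m : ℕ)
    (h : ∀ l : List A, l.length = m + 1 → groupRingAct (prodG l) f = 0) :
    fdeg f ≤ (m : ℕ∞) :=
  sInf_le ⟨m, rfl, act_pow_eq_zero (m + 1) f h⟩

theorem fdeg_eq_of (f : A → B) (s : ℕ)
    (h : ∀ l : List A, l.length = s + 1 → groupRingAct (prodG l) f = 0)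
    (l₀ : List A) (hl₀ : l₀.length = s) (hne : groupRingAct (prodG l₀) f ≠ 0) :
    fdeg f = (s : ℕ∞) := by
  refine le_antisymm (fdeg_le_of f s h) (le_sInf ?_)
  rintro N ⟨n, rfl, hn⟩
  by_contra hlt
  push_neg at hlt
  have hns : n + 1 ≤ s := by exact_mod_cast Nat.add_one_le_iff.mpr (by exact_mod_cast hlt)
  have : prodG l₀ ∈ augIdeal A ^ (n + 1) := by
    refine Ideal.pow_le_pow_right hns ?_
    rw [← hl₀]; exact prodG_mem l₀
  exact hne (hn _ this)

end act

/-! ### Digit sums -/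

variable {p : ℕ}

theorem sum_digits_mul_p (hp : 2 ≤ p) (m : ℕ) :
    (p.digits (p * m)).sum = (p.digits m).sum := by
  rcases Nat.eq_zero_or_pos m with rfl | hm
  · simp
  · rw [Nat.digits_def' (by omega : 1 < p) (by positivity)]
    rw [Nat.mul_mod_right, Nat.mul_div_cancel_left _ (by omega : 0 < p)]
    simp

theorem sum_digits_pow (hp : 2 ≤ p) (v : ℕ) : (p.digits (p ^ v)).sum = 1 := by
  induction v with
  | zero =>
      rw [pow_zero, Nat.digits_def' (by omega : 1 < p) one_pos,
        Nat.mod_eq_of_lt (by omega), Nat.div_eq_of_lt (by omega)]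
      simp
  | succ v ih => rw [pow_succ, mul_comm, sum_digits_mul_p hp, ih]

theorem sum_digits_sub_one (hp : 2 ≤ p) {m : ℕ} (hm : m ≠ 0) (hpm : ¬ p ∣ m) :
    (p.digits (m - 1)).sum + 1 = (p.digits m).sum := by
  have h1 : 1 < p := by omega
  have hdm := Nat.div_add_mod m p
  have hr : m % p ≠ 0 := fun h => hpm (Nat.dvd_of_mod_eq_zero h)
  have hrp : m % p < p := Nat.mod_lt _ (by omega)
  rcases Nat.eq_or_lt_of_le (Nat.one_le_iff_ne_zero.2 hm) with h1m | h1m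
  · rw [← h1m]
    simp [Nat.digits_def' h1 one_pos, Nat.mod_eq_of_lt h1, Nat.div_eq_of_lt h1]
  · have hm1 : 0 < m - 1 := by omega
    rw [Nat.digits_def' h1 (by omega : 0 < m), Nat.digits_def' h1 hm1]
    have key : m - 1 = p * (m / p) + (m % p - 1) := by omega
    have hmod : (m - 1) % p = m % p - 1 := by
      conv_lhs => rw [key]
      rw [Nat.mul_add_mod, Nat.mod_eq_of_lt (show m % p - 1 < p by omega)]
    have hdiv : (m - 1) / p = m / p := by
      conv_lhs => rw [key]
      rw [Nat.mul_add_div (show 0 < p by omega),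
        Nat.div_eq_of_lt (show m % p - 1 < p by omega), Nat.add_zero]
    rw [hmod, hdiv]
    simp only [List.sum_cons]
    omega

theorem sum_digits_sub_pow (hp : p.Prime) :
    ∀ m : ℕ, m ≠ 0 →
      (p.digits (m - p ^ (padicValNat p m))).sum + 1 = (p.digits m).sum := by
  haveI : Fact p.Prime := ⟨hp⟩
  have h2 : 2 ≤ p := hp.two_le
  intro m
  induction m using Nat.strong_induction_on with
  | _ m ih =>
    intro hm
    by_cases hdvd : p ∣ m
    · obtain ⟨m₁, rfl⟩ := hdvd
      have hm₁ : m₁ ≠ 0 := by rintro rfl; simp at hm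
      have hv : padicValNat p (p * m₁) = padicValNat p m₁ + 1 := by
        rw [padicValNat.mul (by omega) hm₁, padicValNat_self]; omega
      have hle : p ^ padicValNat p m₁ ∣ m₁ := pow_padicValNat_dvd
      have hle' : p ^ padicValNat p m₁ ≤ m₁ := Nat.le_of_dvd (by omega) hle
      have hsub : p * m₁ - p ^ (padicValNat p m₁ + 1) = p * (m₁ - p ^ padicValNat p m₁) := by
        rw [pow_succ, mul_comm (p ^ padicValNat p m₁) p, Nat.mul_sub]
      rw [hv, hsub, sum_digits_mul_p h2, sum_digits_mul_p h2]
      exact ih m₁ (by nlinarith [Nat.one_le_iff_ne_zero.2 hm₁]) hm₁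
    · have hv : padicValNat p m = 0 := padicValNat.eq_zero_of_not_dvd hdvd
      rw [hv, pow_zero]
      exact sum_digits_sub_one h2 hm hdvd

theorem sum_digits_eq_zero_iff (hp : p.Prime) {m : ℕ} :
    (p.digits m).sum = 0 ↔ m = 0 := by
  constructor
  · intro h
    by_contra hm
    have := sum_digits_sub_pow hp m hm
    omega
  · rintro rfl; simp

/-! ### Consequences of Kummer's theorem -/

theorem sum_digits_lt_of_not_dvd_choose (hp : p.Prime) {k n : ℕ} (hkn : k < n)
    (h : ¬ p ∣ n.choose k) : (p.digits k).sum < (p.digits n).sum := by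
  haveI : Fact p.Prime := ⟨hp⟩
  have hval : padicValNat p (n.choose k) = 0 := padicValNat.eq_zero_of_not_dvd h
  have hK := sub_one_mul_padicValNat_choose_eq_sub_sum_digits (p := p) hkn.le
  rw [hval, mul_zero] at hK
  have hnk : n - k ≠ 0 := by omega
  have : (p.digits (n - k)).sum ≠ 0 := fun h0 => hnk ((sum_digits_eq_zero_iff hp).1 h0)
  omega

theorem not_dvd_choose_of_sum_digits (hp : p.Prime) {k n : ℕ} (hk : k ≤ n)
    (h : (p.digits k).sum + (p.digits (n - k)).sum = (p.digits n).sum) :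
    ¬ p ∣ n.choose k := by
  haveI : Fact p.Prime := ⟨hp⟩
  have hK := sub_one_mul_padicValNat_choose_eq_sub_sum_digits (p := p) hk
  rw [h, Nat.sub_self] at hK
  have hval : padicValNat p (n.choose k) = 0 := by
    rcases Nat.mul_eq_zero.mp hK with h1 | h2
    · have := hp.two_le; omega
    · exact h2
  intro hdvd
  have hpos : 0 < n.choose k := Nat.choose_pos hk
  have := one_le_padicValNat_of_dvd hpos.ne' hdvd
  omega

/-! ### Lower bound: polynomial difference operators -/

section poly
open Polynomial
variable {F : Type*} [Field F] [Fintype F]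

/-- polynomial-level difference operator -/
noncomputable def pD (a : F) (P : F[X]) : F[X] := taylor a P - P

omit [Fintype F] in
theorem natDegree_pD_le (a : F) (P : F[X]) : (pD a P).natDegree ≤ P.natDegree := by
  refine (natDegree_sub_le _ _).trans ?_
  rw [natDegree_taylor]; omega

theorem exists_eval_ne_zero {P : F[X]} (hP : P ≠ 0) (hd : P.natDegree < Fintype.card F) :
    ∃ x : F, P.eval x ≠ 0 := by
  by_contra hc
  push_neg at hc
  exact hP (P.eq_zero_of_natDegree_lt_card_of_eval_eq_zero Function.injective_id hc hd)

theorem exists_list_poly (hp : p.Prime) [CharP F p] :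
    ∀ s : ℕ, ∀ m : ℕ, (p.digits m).sum = s → ∀ P : F[X],
      P.natDegree < Fintype.card F → P.coeff m ≠ 0 →
      ∃ l : List F, l.length = s ∧ ∃ x : F, (l.foldl (fun Q a => pD a Q) P).eval x ≠ 0 := by
  intro s
  induction s with
  | zero =>
      intro m _ P hd hc
      refine ⟨[], rfl, ?_⟩
      simp only [List.foldl_nil]
      exact exists_eval_ne_zero (fun h0 => hc (by rw [h0, coeff_zero])) hd
  | succ s ih =>
      intro m hm P hd hc
      have hm0 : m ≠ 0 := by
        intro h0; rw [h0] at hm; simp at hm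
      set v := padicValNat p m with hv
      have hpvm : p ^ v ≤ m := Nat.le_of_dvd (Nat.pos_of_ne_zero hm0) pow_padicValNat_dvd
      set m' := m - p ^ v with hm'
      have hm'add : m' + p ^ v = m := by omega
      have hsm' : (p.digits m').sum = s := by
        have h5 := sum_digits_sub_pow hp m hm0
        rw [← hv] at h5
        rw [← hm'] at h5
        omega
      have hchoose : ¬ p ∣ m.choose m' := by
        refine not_dvd_choose_of_sum_digits hp (by omega) ?_
        have : m - m' = p ^ v := by omega
        rw [this, sum_digits_pow hp.two_le]
        omega
      have hchooseF : ((m.choose m' : ℕ) : F) ≠ 0 := by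
        rw [Ne, CharP.cast_eq_zero_iff F p]
        exact hchoose
      set R : F[X] := hasseDeriv m' P - C (P.coeff m') with hR
      have hRcoeff : R.coeff (p ^ v) ≠ 0 := by
        have hpv0 : p ^ v ≠ 0 := pow_ne_zero v (by have := hp.two_le; omega)
        rw [hR, coeff_sub, coeff_C, if_neg hpv0, sub_zero, hasseDeriv_coeff]
        rw [add_comm (p ^ v) m', hm'add]
        exact mul_ne_zero hchooseF hc
      have hRne : R ≠ 0 := fun h0 => hRcoeff (by rw [h0, coeff_zero])
      have hRdeg : R.natDegree < Fintype.card F := by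
        refine lt_of_le_of_lt ((natDegree_sub_le _ _).trans ?_) hd
        simp only [natDegree_C, max_eq_left (Nat.zero_le _)]
        exact (natDegree_hasseDeriv_le P m').trans (Nat.sub_le _ _)
      obtain ⟨a, ha⟩ := exists_eval_ne_zero hRne hRdeg
      have hQcoeff : (pD a P).coeff m' ≠ 0 := by
        have : (pD a P).coeff m' = R.eval a := by
          rw [pD, coeff_sub, taylor_coeff, hR, eval_sub, eval_C]
        rw [this]; exact ha
      have hQdeg : (pD a P).natDegree < Fintype.card F :=
        lt_of_le_of_lt (natDegree_pD_le a P) hd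
      obtain ⟨l, hl, x, hx⟩ := ih m' hsm' (pD a P) hQdeg hQcoeff
      exact ⟨a :: l, by simp [hl], x, hx⟩

theorem act_foldl (l : List F) : ∀ P : F[X],
    groupRingAct (prodG l) (fun y => P.eval y) =
      fun y => (l.foldl (fun Q a => pD a Q) P).eval y := by
  induction l with
  | nil =>
      intro P
      show groupRingAct (prodG []) _ = _
      rw [prodG, act_one, List.foldl_nil]
  | cons a t ih =>
      intro P
      rw [act_prodG_cons, List.foldl_cons]
      have : dOp a (fun y => P.eval y) = fun y => (pD a P).eval y := by
        funext y
        simp [dOp, pD, taylor_eval]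
      rw [this, ih (pD a P)]

/-! ### Upper bound: span of low-weight monomials -/

/-- span of monomial functions of digit-sum at most `m` -/
noncomputable def Vsp (p : ℕ) (F : Type*) [Field F] (m : ℕ) : Submodule F (F → F) :=
  Submodule.span F {f : F → F | ∃ k : ℕ, (p.digits k).sum ≤ m ∧ f = fun x => x ^ k}

omit [Fintype F] in
theorem dOp_add (a : F) (f g : F → F) : dOp a (f + g) = dOp a f + dOp a g := by
  funext x; simp [dOp]; ring

omit [Fintype F] in
theorem dOp_smul (a : F) (c : F) (f : F → F) : dOp a (c • f) = c • dOp a f := by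
  funext x; simp [dOp, mul_sub]

noncomputable def dLin (a : F) : (F → F) →ₗ[F] (F → F) where
  toFun := dOp a
  map_add' := dOp_add a
  map_smul' := dOp_smul a

omit [Fintype F] in
theorem dOp_monomial (hp : p.Prime) [CharP F p] (a : F) {k m : ℕ}
    (hk : (p.digits k).sum ≤ m + 1) :
    dOp a (fun x : F => x ^ k) ∈ Vsp p F m := by
  have hform : dOp a (fun x : F => x ^ k) =
      ∑ j ∈ Finset.range k, (((k.choose j : ℕ) : F) * a ^ (k - j)) • (fun x : F => x ^ j) := by
    funext x
    rw [Finset.sum_apply]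
    simp only [Pi.smul_apply, smul_eq_mul, dOp]
    rw [add_pow, Finset.sum_range_succ]
    simp only [Nat.choose_self, Nat.sub_self, pow_zero, Nat.cast_one, mul_one]
    rw [add_sub_cancel_right]
    exact Finset.sum_congr rfl fun j _ => by ring
  rw [hform]
  refine Submodule.sum_mem _ ?_
  intro j hj
  rw [Finset.mem_range] at hj
  by_cases hC : ((k.choose j : ℕ) : F) = 0
  · rw [hC, zero_mul, zero_smul]
    exact Submodule.zero_mem _
  · have hpC : ¬ p ∣ k.choose j := fun h => hC ((CharP.cast_eq_zero_iff F p _).2 h)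
    have := sum_digits_lt_of_not_dvd_choose hp hj hpC
    exact Submodule.smul_mem _ _ (Submodule.subset_span ⟨j, by omega, rfl⟩)

omit [Fintype F] in
theorem dOp_Vsp (hp : p.Prime) [CharP F p] (a : F) (m : ℕ) :
    Vsp p F (m + 1) ≤ (Vsp p F m).comap (dLin a) := by
  rw [Vsp, Submodule.span_le]
  rintro _ ⟨k, hk, rfl⟩
  exact dOp_monomial hp a hk

omit [Fintype F] in
theorem dOp_V0 (hp : p.Prime) [CharP F p] (a : F) {f : F → F} (hf : f ∈ Vsp p F 0) :
    dOp a f = 0 := by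
  have : Vsp p F 0 ≤ LinearMap.ker (dLin a) := by
    rw [Vsp, Submodule.span_le]
    rintro _ ⟨k, hk, rfl⟩
    have hk0 : k = 0 := (sum_digits_eq_zero_iff hp).1 (Nat.le_zero.1 hk)
    subst hk0
    simp only [SetLike.mem_coe, LinearMap.mem_ker]
    funext x
    simp [dLin, dOp]
  exact this hf

omit [Fintype F] in
theorem act_Vsp (hp : p.Prime) [CharP F p] :
    ∀ m : ℕ, ∀ f : F → F, f ∈ Vsp p F m →
      ∀ l : List F, l.length = m + 1 → groupRingAct (prodG l) f = 0 := by
  intro m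
  induction m with
  | zero =>
      intro f hf l hl
      match l, hl with
      | [a], _ =>
        rw [act_prodG_cons]
        show groupRingAct (prodG []) _ = _
        rw [prodG, act_one, dOp_V0 hp a hf]
  | succ m ih =>
      intro f hf l hl
      match l, hl with
      | a :: t, hl =>
        rw [act_prodG_cons]
        exact ih (dOp a f) (dOp_Vsp hp a m hf) t (by simpa using hl)

end poly

end FdegAux

open FdegAux Polynomial in
theorem fdeg_pow_fun {p : ℕ} (hp : p.Prime) {F : Type*} [Field F] [Fintype F]
    [CharP F p] (n : ℕ) :
    fdeg (fun x : F => x ^ n) ≤ ((Nat.digits p n).sum : ℕ∞) ∧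
      (n < Fintype.card F → fdeg (fun x : F => x ^ n) = ((Nat.digits p n).sum : ℕ∞)) := by
  set s := (Nat.digits p n).sum with hs
  have hupper : ∀ l : List F, l.length = s + 1 →
      groupRingAct (prodG l) (fun x : F => x ^ n) = 0 := by
    intro l hl
    exact act_Vsp hp s _ (Submodule.subset_span ⟨n, le_refl s, rfl⟩) l hl
  refine ⟨fdeg_le_of _ s hupper, ?_⟩
  intro hcard
  have hXn : (fun x : F => x ^ n) = fun x : F => (X ^ n : F[X]).eval x := by
    funext x; simp
  obtain ⟨l₀, hlen, x, hx⟩ := exists_list_poly hp s n rfl (X ^ n : F[X])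
    (by rw [natDegree_X_pow]; exact hcard)
    (by rw [coeff_X_pow, if_pos rfl]; exact one_ne_zero)
  refine fdeg_eq_of _ s hupper l₀ hlen ?_
  rw [hXn, act_foldl l₀ (X ^ n : F[X])]
  intro h0
  exact hx (congrFun h0 x)
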